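/- Let A, B ⊆ [m] with |A| + |B| ≥ 2 and D = Δ_A + wΔ_B ⊆ F_4^m. Then |D^*| = 2^{|A|+|B|} − 1, the quaternary code C_{D^*} has exactly 4^{|A∪B|} distinct codewords (dimension |A∪B| over F_4), and the multiset {wt(c_{D^*}(x)) : x ∈ F_4^m} consists of: 0 with multiplicity 4^{m−|A∪B|}; 2^{|A|+|B|−1} with multiplicity 3·4^{m−|A∪B|}(2^{|A\B|+|B\A|} − 1); and 3·2^{|A|+|B|−2} with multiplicity 4^{m−|A∪B|}(4^{|A∪B|} − 1 − 3(2^{|A\B|+|B\A|} − 1)). In particular, if A ≠ B, the minimum nonzero weight (minimum distance) of C_{D^*} is 2^{|A|+|B|−1}. -/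

import Mathlib

open Finset

/-- The support of a binary vector, as a finset of coordinates. -/
def supp {m : ℕ} (v : Fin m → ZMod 2) : Finset (Fin m) :=
  Finset.univ.filter (fun i => v i ≠ 0)

/-- The simplicial complex generated by `A`: all binary vectors with support contained in `A`. -/
def delta {m : ℕ} (A : Finset (Fin m)) : Finset (Fin m → ZMod 2) :=
  Finset.univ.filter (fun v => supp v ⊆ A)

variable {F : Type} [Field F] [Fintype F] [DecidableEq F]

/-- The embedding of `F_2 = {0,1}` into a field `F`. -/
def e2 (a : ZMod 2) : F := (a.val : F)

/-- The inner product `x·d = Σ x_i d_i` of two vectors over `F`. -/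
def dotF {m : ℕ} (x d : Fin m → F) : F := ∑ i, x i * d i

/-- The quaternary vector `d_1 + w·d_2` attached to a pair of binary vectors. -/
def dvec {m : ℕ} (w : F) (p : (Fin m → ZMod 2) × (Fin m → ZMod 2)) : Fin m → F :=
  fun i => e2 (p.1 i) + w * e2 (p.2 i)

/-- The Hamming weight of the codeword `c_D(x) = (x·d)_{d∈D}`. -/
def wtF {m : ℕ} (D : Finset (Fin m → F)) (x : Fin m → F) : ℕ :=
  (D.filter (fun d => dotF x d ≠ 0)).card

/-- The codeword `c_D(x) = (x·d)_{d∈D}` of the code with defining set `D`. -/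
def codeword {m : ℕ} (D : Finset (Fin m → F)) (x : Fin m → F) : {d // d ∈ D} → F :=
  fun d => dotF x d.1

set_option linter.unusedSectionVars false

-- ## basic field facts

lemma two_eq_zero (hF : Fintype.card F = 4) : (2 : F) = 0 := by
  have h4 : (4 : F) = 0 := by
    have := FiniteField.cast_card_eq_zero F
    rwa [hF] at this
  have : (2 : F) * 2 = 0 := by linear_combination h4
  rcases mul_eq_zero.mp this with h | h <;> exact h

lemma zmod2_cases (a : ZMod 2) : a = 0 ∨ a = 1 := by revert a; decide

lemma e2_zero : (e2 0 : F) = 0 := by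
  simp only [e2, ZMod.val_zero, Nat.cast_zero]

lemma e2_one : (e2 1 : F) = 1 := by
  simp only [e2, ZMod.val_one, Nat.cast_one]

lemma e2_add (hF : Fintype.card F = 4) (a b : ZMod 2) :
    (e2 (a + b) : F) = e2 a + e2 b := by
  have h2 := two_eq_zero (F := F) hF
  rcases zmod2_cases a with ha | ha <;> rcases zmod2_cases b with hb | hb <;>
    subst ha <;> subst hb <;>
    simp only [add_zero, zero_add, e2_zero, e2_one] <;> try rfl
  · have : (1 : ZMod 2) + 1 = 0 := by decide
    rw [this, e2_zero]
    linear_combination -h2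

lemma w_cube (w : F) (hw : w ^ 2 + w + 1 = 0) : w * w * w = 1 := by
  linear_combination (w - 1) * hw

lemma w_ne_zero (w : F) (hw : w ^ 2 + w + 1 = 0) : w ≠ 0 := by
  intro h
  rw [h] at hw
  norm_num at hw

lemma w_ne_one (hF : Fintype.card F = 4) (w : F) (hw : w ^ 2 + w + 1 = 0) : w ≠ 1 := by
  intro h
  rw [h] at hw
  have h2 := two_eq_zero hF
  have : (1 : F) = 0 := by linear_combination hw - h2
  exact one_ne_zero this

lemma indep (hF : Fintype.card F = 4) (w : F) (hw : w ^ 2 + w + 1 = 0)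
    (a b : ZMod 2) (h : (e2 a : F) + w * e2 b = 0) : a = 0 ∧ b = 0 := by
  have h2 := two_eq_zero (F := F) hF
  rcases zmod2_cases a with ha | ha <;> rcases zmod2_cases b with hb | hb <;>
      subst ha <;> subst hb
  · exact ⟨rfl, rfl⟩
  · rw [e2_zero, e2_one] at h
    simp only [mul_one, zero_add] at h
    exact absurd h (w_ne_zero w hw)
  · rw [e2_zero, e2_one] at h
    simp only [mul_zero, add_zero] at h
    exact absurd h one_ne_zero
  · rw [e2_one] at h
    simp only [mul_one] at h
    exact absurd (show w = 1 by linear_combination h - h2) (w_ne_one hF w hw)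

-- ## delta facts

lemma mem_delta {m : ℕ} {A : Finset (Fin m)} {v : Fin m → ZMod 2} :
    v ∈ delta A ↔ ∀ i, i ∉ A → v i = 0 := by
  simp only [delta, supp, mem_filter, mem_univ, true_and, Finset.subset_iff,
    mem_filter, mem_univ, true_and, ne_eq]
  constructor
  · intro h i hiA
    by_contra hv
    exact hiA (h hv)
  · intro h i hv
    by_contra hiA
    exact hv (h i hiA)

lemma zero_mem_delta {m : ℕ} {A : Finset (Fin m)} : (0 : Fin m → ZMod 2) ∈ delta A := by
  rw [mem_delta]; intro i _; rfl

lemma add_mem_delta {m : ℕ} {A : Finset (Fin m)} {u v : Fin m → ZMod 2}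
    (hu : u ∈ delta A) (hv : v ∈ delta A) : u + v ∈ delta A := by
  rw [mem_delta] at *
  intro i hi
  show u i + v i = 0
  rw [hu i hi, hv i hi, add_zero]

lemma card_delta {m : ℕ} (A : Finset (Fin m)) : (delta A).card = 2 ^ A.card := by
  rw [← Finset.card_powerset]
  apply Finset.card_nbij' (i := fun v => supp v)
    (j := fun S => (fun i => if i ∈ S then 1 else 0))
  · intro v hv
    rw [Finset.mem_coe, mem_delta] at hv
    simp only [Finset.mem_coe, Finset.mem_powerset, Finset.subset_iff, supp, mem_filter,
      mem_univ, true_and, ne_eq]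
    intro i hi
    by_contra hiA
    exact hi (hv i hiA)
  · intro S hS
    rw [Finset.mem_coe, Finset.mem_powerset] at hS
    rw [Finset.mem_coe, mem_delta]
    intro i hi
    simp only [if_neg (fun h => hi (hS h))]
  · intro v hv
    funext i
    simp only [supp, mem_filter, mem_univ, true_and, ne_eq, ite_not]
    rcases zmod2_cases (v i) with h | h <;> simp [h]
  · intro S hS
    ext i
    simp only [supp, mem_filter, mem_univ, true_and, ne_eq, ite_eq_right_iff]
    by_cases h : i ∈ S <;> simp [h]

-- ## dvec facts

lemma dvec_add {m : ℕ} (hF : Fintype.card F = 4) (w : F)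
    (p q : (Fin m → ZMod 2) × (Fin m → ZMod 2)) :
    dvec w (p + q) = dvec w p + dvec w q := by
  funext i
  show (dvec w (p+q)) i = dvec w p i + dvec w q i
  simp only [dvec, Prod.fst_add, Prod.snd_add, Pi.add_apply, e2_add hF]
  ring

lemma dvec_zero {m : ℕ} (w : F) : dvec (m := m) w 0 = 0 := by
  funext i
  show e2 ((0 : Fin m → ZMod 2) i) + w * e2 ((0 : Fin m → ZMod 2) i) = 0
  simp [e2_zero]

lemma dvec_inj {m : ℕ} (hF : Fintype.card F = 4) (w : F) (hw : w ^ 2 + w + 1 = 0) :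
    Function.Injective (dvec (m := m) w) := by
  intro p q h
  have key : ∀ i, p.1 i = q.1 i ∧ p.2 i = q.2 i := by
    intro i
    have hi : (e2 (p.1 i) : F) + w * e2 (p.2 i) = e2 (q.1 i) + w * e2 (q.2 i) :=
      congrFun h i
    have h2 : (e2 (p.1 i + q.1 i) : F) + w * e2 (p.2 i + q.2 i) = 0 := by
      rw [e2_add hF, e2_add hF]
      have hq1 : (e2 (q.1 i) : F) + e2 (q.1 i) = 0 := by
        rcases zmod2_cases (q.1 i) with h' | h' <;> rw [h'] <;>
          simp [e2_zero, e2_one]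
        linear_combination two_eq_zero hF
      have hq2 : (e2 (q.2 i) : F) + e2 (q.2 i) = 0 := by
        rcases zmod2_cases (q.2 i) with h' | h' <;> rw [h'] <;>
          simp [e2_zero, e2_one]
        linear_combination two_eq_zero hF
      linear_combination hi + hq1 + w * hq2
    obtain ⟨h1, h2⟩ := indep hF w hw _ _ h2
    constructor
    · have : p.1 i = -(q.1 i) := by linear_combination h1
      rw [this]; rcases zmod2_cases (q.1 i) with h' | h' <;> rw [h'] <;> decide
    · have : p.2 i = -(q.2 i) := by linear_combination h2
      rw [this]; rcases zmod2_cases (q.2 i) with h' | h' <;> rw [h'] <;> decide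
  ext i
  · exact (key i).1
  · exact (key i).2

-- ## single vectors and dot products

def sing {m : ℕ} (i : Fin m) : Fin m → ZMod 2 := fun j => if j = i then 1 else 0

lemma sing_mem_delta {m : ℕ} {A : Finset (Fin m)} {i : Fin m} (hi : i ∈ A) :
    sing i ∈ delta A := by
  rw [mem_delta]
  intro j hj
  simp only [sing, ite_eq_right_iff]
  intro h; subst h; exact absurd hi hj

lemma dotF_add_right {m : ℕ} (x d e : Fin m → F) :
    dotF x (d + e) = dotF x d + dotF x e := by
  simp only [dotF, Pi.add_apply, mul_add, Finset.sum_add_distrib]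

lemma dot_dvec_zero {m : ℕ} (w : F) (x : Fin m → F) : dotF x (dvec w 0) = 0 := by
  rw [dvec_zero]
  simp [dotF]

lemma dot_zero {m : ℕ} (x : Fin m → F) : dotF x 0 = 0 := by simp [dotF]

lemma dot_dvec_singleA {m : ℕ} (w : F) (x : Fin m → F) (i : Fin m) :
    dotF x (dvec w (sing i, (0 : Fin m → ZMod 2))) = x i := by
  rw [dotF]
  rw [Finset.sum_eq_single i]
  · simp [dvec, sing, e2_zero, e2_one]
  · intro j _ hj
    simp [dvec, sing, hj, e2_zero]
  · intro h; exact absurd (Finset.mem_univ i) h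

lemma dot_dvec_singleB {m : ℕ} (w : F) (x : Fin m → F) (i : Fin m) :
    dotF x (dvec w ((0 : Fin m → ZMod 2), sing i)) = x i * w := by
  rw [dotF]
  rw [Finset.sum_eq_single i]
  · simp [dvec, sing, e2_zero, e2_one, mul_comm]
  · intro j _ hj
    simp [dvec, sing, hj, e2_zero]
  · intro h; exact absurd (Finset.mem_univ i) h

-- ## main defs

def DS {m : ℕ} (A B : Finset (Fin m)) : Finset ((Fin m → ZMod 2) × (Fin m → ZMod 2)) :=
  delta A ×ˢ delta B

def Sx {m : ℕ} (w : F) (A B : Finset (Fin m)) (x : Fin m → F) : Finset F :=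
  (DS A B).image (fun p => dotF x (dvec w p))

def Kx {m : ℕ} (w : F) (A B : Finset (Fin m)) (x : Fin m → F) : ℕ :=
  ((DS A B).filter (fun p => dotF x (dvec w p) = 0)).card

def Zp {m : ℕ} (A B : Finset (Fin m)) (x : Fin m → F) : Prop :=
  ∀ i ∈ A ∪ B, x i = 0

def genS {m : ℕ} (w c : F) (A B : Finset (Fin m)) (x : Fin m → F) : Prop :=
  (∀ i ∈ A, x i = 0 ∨ x i = c) ∧ (∀ i ∈ B, x i * w = 0 ∨ x i * w = c)

instance {m : ℕ} (A B : Finset (Fin m)) (x : Fin m → F) : Decidable (Zp A B x) := by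
  unfold Zp; infer_instance

instance {m : ℕ} (w c : F) (A B : Finset (Fin m)) (x : Fin m → F) :
    Decidable (genS w c A B x) := by
  unfold genS; infer_instance

lemma card_DS {m : ℕ} (A B : Finset (Fin m)) :
    (DS A B).card = 2 ^ (A.card + B.card) := by
  rw [DS, Finset.card_product, card_delta, card_delta, pow_add]

lemma zero_mem_DS {m : ℕ} (A B : Finset (Fin m)) : (0 : _ × _) ∈ DS A B :=
  Finset.mem_product.mpr ⟨zero_mem_delta, zero_mem_delta⟩

lemma add_mem_DS {m : ℕ} {A B : Finset (Fin m)} {p q : _ × _}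
    (hp : p ∈ DS A B) (hq : q ∈ DS A B) : p + q ∈ DS A B := by
  rw [DS, Finset.mem_product] at *
  exact ⟨add_mem_delta hp.1 hq.1, add_mem_delta hp.2 hq.2⟩

-- ## fiber counting

lemma pair_add_self {m : ℕ} (p : (Fin m → ZMod 2) × (Fin m → ZMod 2)) : p + p = 0 := by
  ext i
  · show p.1 i + p.1 i = 0
    rcases zmod2_cases (p.1 i) with h | h <;> rw [h] <;> decide
  · show p.2 i + p.2 i = 0
    rcases zmod2_cases (p.2 i) with h | h <;> rw [h] <;> decide

lemma L_add {m : ℕ} (hF : Fintype.card F = 4) (w : F) (x : Fin m → F)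
    (p q : (Fin m → ZMod 2) × (Fin m → ZMod 2)) :
    dotF x (dvec w (p + q)) = dotF x (dvec w p) + dotF x (dvec w q) := by
  rw [dvec_add hF, dotF_add_right]

lemma fiber_card {m : ℕ} (hF : Fintype.card F = 4) (w : F) (A B : Finset (Fin m))
    (x : Fin m → F) {t : F} (ht : t ∈ Sx w A B x) :
    ((DS A B).filter (fun p => dotF x (dvec w p) = t)).card = Kx w A B x := by
  obtain ⟨p0, hp0, hLp0⟩ := Finset.mem_image.mp ht
  rw [Kx]
  symm
  apply Finset.card_bij' (i := fun p _ => p + p0) (j := fun q _ => q + p0)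
  · intro p hp
    rw [Finset.mem_filter] at *
    refine ⟨add_mem_DS hp.1 hp0, ?_⟩
    rw [L_add hF, hp.2, hLp0, zero_add]
  · intro q hq
    rw [Finset.mem_filter] at *
    refine ⟨add_mem_DS hq.1 hp0, ?_⟩
    rw [L_add hF, hq.2, hLp0]
    have h2 : t + t = 0 := by
      rw [← hLp0, ← L_add hF, pair_add_self, dot_dvec_zero]
    exact h2
  · intro p _
    rw [add_assoc, pair_add_self, add_zero]
  · intro q _
    rw [add_assoc, pair_add_self, add_zero]

lemma card_DS_eq {m : ℕ} (hF : Fintype.card F = 4) (w : F) (A B : Finset (Fin m))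
    (x : Fin m → F) :
    (DS A B).card = (Sx w A B x).card * Kx w A B x := by
  rw [Finset.card_eq_sum_card_fiberwise
    (f := fun p => dotF x (dvec w p)) (t := Sx w A B x)
    (fun p hp => Finset.mem_image_of_mem _ hp)]
  rw [Finset.sum_congr rfl (fun t ht => fiber_card hF w A B x ht), Finset.sum_const,
    smul_eq_mul]

lemma Kx_pos {m : ℕ} (w : F) (A B : Finset (Fin m)) (x : Fin m → F) :
    0 < Kx w A B x := by
  rw [Kx, Finset.card_pos]
  exact ⟨0, Finset.mem_filter.mpr ⟨zero_mem_DS A B, dot_dvec_zero w x⟩⟩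

lemma zero_mem_Sx {m : ℕ} (w : F) (A B : Finset (Fin m)) (x : Fin m → F) :
    (0 : F) ∈ Sx w A B x :=
  Finset.mem_image.mpr ⟨0, zero_mem_DS A B, dot_dvec_zero w x⟩

-- ## weight formula

lemma wt_eq {m : ℕ} (hF : Fintype.card F = 4) (w : F) (hw : w ^ 2 + w + 1 = 0)
    (A B : Finset (Fin m)) (x : Fin m → F) :
    wtF (((delta A ×ˢ delta B).image (dvec w)).erase 0) x
      = (DS A B).card - Kx w A B x := by
  have hD : (delta A ×ˢ delta B).image (dvec w) = (DS A B).image (dvec w) := rfl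
  rw [wtF, hD]
  have hfe : (((DS A B).image (dvec w)).erase 0).filter (fun d => dotF x d ≠ 0)
      = ((DS A B).image (dvec w)).filter (fun d => dotF x d ≠ 0) := by
    ext d
    simp only [Finset.mem_filter, Finset.mem_erase, ne_eq]
    constructor
    · tauto
    · intro ⟨hd, hdot⟩
      refine ⟨⟨?_, hd⟩, hdot⟩
      intro h0; subst h0; exact hdot (dot_zero x)
  rw [hfe]
  have hsplit := Finset.card_filter_add_card_filter_not
    (s := (DS A B).image (dvec w)) (p := fun d => dotF x d ≠ 0)
  have hzero : (((DS A B).image (dvec w)).filter (fun d => ¬ dotF x d ≠ 0)).card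
      = Kx w A B x := by
    have : ((DS A B).image (dvec w)).filter (fun d => ¬ dotF x d ≠ 0)
        = ((DS A B).filter (fun p => dotF x (dvec w p) = 0)).image (dvec w) := by
      rw [Finset.filter_image]
      congr 1
      ext p
      simp only [ne_eq, not_not]
    rw [this, Kx, Finset.card_image_of_injective _ (dvec_inj hF w hw)]
  have hcard : ((DS A B).image (dvec w)).card = (DS A B).card :=
    Finset.card_image_of_injective _ (dvec_inj hF w hw)
  omega

-- ## line lemmas

lemma sumLine {ι : Type*} (c : F) (hc : c + c = 0) (s : Finset ι) (f : ι → F)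
    (h : ∀ i ∈ s, f i = 0 ∨ f i = c) : s.sum f = 0 ∨ s.sum f = c := by
  induction s using Finset.cons_induction_on with
  | empty => left; simp
  | cons _ _ ha ih =>
    rename_i a s'
    rw [Finset.sum_cons]
    rcases h a (Finset.mem_cons_self a s') with h1 | h1 <;>
      rcases ih (fun i hi => h i (Finset.mem_cons_of_mem hi)) with h2 | h2 <;>
      rw [h1, h2] <;> simp [hc]

lemma genS_L_mem {m : ℕ} (hF : Fintype.card F = 4) (w c : F) (A B : Finset (Fin m))
    (x : Fin m → F) (hg : genS w c A B x) {p : (Fin m → ZMod 2) × (Fin m → ZMod 2)}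
    (hp : p ∈ DS A B) :
    dotF x (dvec w p) = 0 ∨ dotF x (dvec w p) = c := by
  have h2 : (2 : F) = 0 := two_eq_zero hF
  have hc : c + c = 0 := by linear_combination c * h2
  rw [DS, Finset.mem_product, mem_delta, mem_delta] at hp
  rw [dotF]
  apply sumLine c hc
  intro i _
  show x i * dvec w p i = 0 ∨ _
  have ht1 : x i * e2 (p.1 i) = 0 ∨ x i * e2 (p.1 i) = c := by
    by_cases hiA : i ∈ A
    · rcases zmod2_cases (p.1 i) with h | h
      · left; rw [h, e2_zero, mul_zero]
      · rw [h, e2_one, mul_one]; exact hg.1 i hiA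
    · left; rw [hp.1 i hiA, e2_zero, mul_zero]
  have ht2 : x i * (w * e2 (p.2 i)) = 0 ∨ x i * (w * e2 (p.2 i)) = c := by
    by_cases hiB : i ∈ B
    · rcases zmod2_cases (p.2 i) with h | h
      · left; rw [h, e2_zero, mul_zero, mul_zero]
      · rw [h, e2_one, mul_one]
        rcases hg.2 i hiB with h' | h'
        · left; linear_combination h'
        · right; linear_combination h'
    · left; rw [hp.2 i hiB, e2_zero, mul_zero, mul_zero]
  have hexp : x i * dvec w p i = x i * e2 (p.1 i) + x i * (w * e2 (p.2 i)) := by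
    rw [dvec]; ring
  rw [hexp]
  rcases ht1 with h1 | h1 <;> rcases ht2 with h2' | h2' <;> rw [h1, h2'] <;>
    simp [hc]

lemma genA_mem_Sx {m : ℕ} (w : F) (A B : Finset (Fin m)) (x : Fin m → F)
    {i : Fin m} (hi : i ∈ A) : x i ∈ Sx w A B x := by
  rw [Sx]
  apply Finset.mem_image.mpr
  exact ⟨(sing i, 0), Finset.mem_product.mpr ⟨sing_mem_delta hi, zero_mem_delta⟩,
    dot_dvec_singleA w x i⟩

lemma genB_mem_Sx {m : ℕ} (w : F) (A B : Finset (Fin m)) (x : Fin m → F)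
    {i : Fin m} (hi : i ∈ B) : x i * w ∈ Sx w A B x := by
  rw [Sx]
  apply Finset.mem_image.mpr
  exact ⟨(0, sing i), Finset.mem_product.mpr ⟨zero_mem_delta, sing_mem_delta hi⟩,
    dot_dvec_singleB w x i⟩

lemma Zp_genS {m : ℕ} (w c : F) (A B : Finset (Fin m)) (x : Fin m → F)
    (hz : Zp A B x) : genS w c A B x := by
  constructor
  · intro i hi; left; exact hz i (Finset.mem_union_left _ hi)
  · intro i hi; left; rw [hz i (Finset.mem_union_right _ hi), zero_mul]

lemma Sx_of_Zp {m : ℕ} (hF : Fintype.card F = 4) (w : F) (A B : Finset (Fin m))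
    (x : Fin m → F) (hz : Zp A B x) : Sx w A B x = {0} := by
  apply Finset.Subset.antisymm
  · intro t ht
    obtain ⟨p, hp, hLp⟩ := Finset.mem_image.mp ht
    rcases genS_L_mem hF w 0 A B x (Zp_genS w 0 A B x hz) hp with h | h <;>
      simp [Finset.mem_singleton, ← hLp, h]
  · intro t ht
    rw [Finset.mem_singleton] at ht
    subst ht
    exact zero_mem_Sx w A B x

-- helper: from ¬Zp get a nonzero "generator"
lemma exists_nonzero_gen {m : ℕ} (w : F) (hw : w ^ 2 + w + 1 = 0)
    (A B : Finset (Fin m)) (x : Fin m → F) (hz : ¬ Zp A B x) :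
    ∃ g ∈ Sx w A B x, g ≠ 0 ∧
      ((∃ i ∈ A, g = x i) ∨ (∃ i ∈ B, g = x i * w)) := by
  rw [Zp] at hz
  push_neg at hz
  obtain ⟨i, hi, hxi⟩ := hz
  rcases Finset.mem_union.mp hi with hiA | hiB
  · exact ⟨x i, genA_mem_Sx w A B x hiA, hxi, Or.inl ⟨i, hiA, rfl⟩⟩
  · refine ⟨x i * w, genB_mem_Sx w A B x hiB, ?_, Or.inr ⟨i, hiB, rfl⟩⟩
    exact mul_ne_zero hxi (w_ne_zero w hw)

lemma Sx_of_line {m : ℕ} (hF : Fintype.card F = 4) (w : F) (hw : w ^ 2 + w + 1 = 0)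
    {c : F} (A B : Finset (Fin m)) (x : Fin m → F)
    (hg : genS w c A B x) (hz : ¬ Zp A B x) : Sx w A B x = {0, c} ∧ c ≠ 0 := by
  obtain ⟨g, hgS, hg0, hgen⟩ := exists_nonzero_gen w hw A B x hz
  have hgc : g = c := by
    rcases hgen with ⟨i, hi, rfl⟩ | ⟨i, hi, rfl⟩
    · rcases hg.1 i hi with h | h
      · exact absurd h hg0
      · exact h
    · rcases hg.2 i hi with h | h
      · exact absurd h hg0
      · exact h
  subst hgc
  refine ⟨Finset.Subset.antisymm ?_ ?_, hg0⟩
  · intro t ht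
    obtain ⟨p, hp, hLp⟩ := Finset.mem_image.mp ht
    rcases genS_L_mem hF w g A B x hg hp with h | h <;>
      simp [← hLp, h]
  · intro t ht
    rcases Finset.mem_insert.mp ht with h | h
    · subst h; exact zero_mem_Sx w A B x
    · rw [Finset.mem_singleton] at h; subst h; exact hgS

lemma Sx_add_mem {m : ℕ} (hF : Fintype.card F = 4) (w : F) (A B : Finset (Fin m))
    (x : Fin m → F) {t1 t2 : F} (h1 : t1 ∈ Sx w A B x) (h2 : t2 ∈ Sx w A B x) :
    t1 + t2 ∈ Sx w A B x := by
  obtain ⟨p, hp, rfl⟩ := Finset.mem_image.mp h1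
  obtain ⟨q, hq, rfl⟩ := Finset.mem_image.mp h2
  exact Finset.mem_image.mpr ⟨p + q, add_mem_DS hp hq, L_add hF w x p q⟩

lemma negEqSelfF (hF : Fintype.card F = 4) (a : F) : -a = a := by
  have h2 := two_eq_zero (F := F) hF
  linear_combination -a * h2

lemma Sx_of_full {m : ℕ} (hF : Fintype.card F = 4) (w : F) (hw : w ^ 2 + w + 1 = 0)
    (A B : Finset (Fin m)) (x : Fin m → F)
    (hg : ¬ ∃ c, genS w c A B x) : (Sx w A B x).card = 4 := by
  have hz : ¬ Zp A B x := fun h => hg ⟨0, Zp_genS w 0 A B x h⟩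
  obtain ⟨g, hgS, hg0, _⟩ := exists_nonzero_gen w hw A B x hz
  have hng : ¬ genS w g A B x := fun h => hg ⟨g, h⟩
  rw [genS] at hng
  push_neg at hng
  have ht2 : ∃ t2 ∈ Sx w A B x, t2 ≠ 0 ∧ t2 ≠ g := by
    by_cases hA : ∀ i ∈ A, x i = 0 ∨ x i = g
    · obtain ⟨i, hi, h1, h2⟩ := hng hA
      exact ⟨x i * w, genB_mem_Sx w A B x hi, h1, h2⟩
    · push_neg at hA
      obtain ⟨i, hi, h1, h2⟩ := hA
      exact ⟨x i, genA_mem_Sx w A B x hi, h1, h2⟩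
  obtain ⟨t2, ht2S, ht20, ht2g⟩ := ht2
  have hsum : g + t2 ∈ Sx w A B x := Sx_add_mem hF w A B x hgS ht2S
  have hs0 : g + t2 ≠ 0 := by
    intro h
    have : g = -t2 := by linear_combination h
    rw [negEqSelfF hF] at this
    exact ht2g this.symm
  have hsg : g + t2 ≠ g := fun h => ht20 (by linear_combination h)
  have hst : g + t2 ≠ t2 := fun h => hg0 (by linear_combination h)
  have hsub : ({0, g, t2, g + t2} : Finset F) ⊆ Sx w A B x := by
    intro t ht
    simp only [Finset.mem_insert, Finset.mem_singleton] at ht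
    rcases ht with rfl | rfl | rfl | rfl
    · exact zero_mem_Sx w A B x
    · exact hgS
    · exact ht2S
    · exact hsum
  have hcard4 : ({0, g, t2, g + t2} : Finset F).card = 4 := by
    have m1 : (0 : F) ∉ ({g, t2, g + t2} : Finset F) := by
      simp only [Finset.mem_insert, Finset.mem_singleton]
      push_neg
      exact ⟨Ne.symm hg0, Ne.symm ht20, Ne.symm hs0⟩
    have m2 : g ∉ ({t2, g + t2} : Finset F) := by
      simp only [Finset.mem_insert, Finset.mem_singleton]
      push_neg
      exact ⟨Ne.symm ht2g, Ne.symm hsg⟩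
    have m3 : t2 ∉ ({g + t2} : Finset F) := by
      simp only [Finset.mem_singleton]
      exact Ne.symm hst
    rw [Finset.card_insert_of_notMem m1, Finset.card_insert_of_notMem m2,
      Finset.card_insert_of_notMem m3, Finset.card_singleton]
  have hle : (Sx w A B x).card ≤ 4 := by
    calc (Sx w A B x).card ≤ (Finset.univ : Finset F).card := Finset.card_le_univ _
    _ = 4 := by rw [Finset.card_univ, hF]
  have hge : 4 ≤ (Sx w A B x).card := by
    rw [← hcard4]
    exact Finset.card_le_card hsub
  omega

-- ## weight trichotomy

lemma wt_of_Zp {m : ℕ} (hF : Fintype.card F = 4) (w : F) (hw : w ^ 2 + w + 1 = 0)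
    (A B : Finset (Fin m)) (x : Fin m → F) (hz : Zp A B x) :
    wtF (((delta A ×ˢ delta B).image (dvec w)).erase 0) x = 0 := by
  rw [wt_eq hF w hw]
  have h := card_DS_eq hF w A B x
  rw [Sx_of_Zp hF w A B x hz, Finset.card_singleton, one_mul] at h
  omega

lemma wt_of_line {m : ℕ} (hF : Fintype.card F = 4) (w : F) (hw : w ^ 2 + w + 1 = 0)
    (A B : Finset (Fin m)) (x : Fin m → F) (hs : 1 ≤ A.card + B.card)
    {c : F} (hgen : genS w c A B x) (hz : ¬ Zp A B x) :
    wtF (((delta A ×ˢ delta B).image (dvec w)).erase 0) x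
      = 2 ^ (A.card + B.card - 1) := by
  rw [wt_eq hF w hw]
  have h := card_DS_eq hF w A B x
  obtain ⟨hSeq, hc0⟩ := Sx_of_line hF w hw A B x hgen hz
  have hc2 : (Sx w A B x).card = 2 := by
    rw [hSeq, Finset.card_insert_of_notMem (by simp [Ne.symm hc0]), Finset.card_singleton]
  rw [hc2] at h
  have hpow : (DS A B).card = 2 * 2 ^ (A.card + B.card - 1) := by
    rw [card_DS]
    rw [← pow_succ']
    congr 1
    omega
  omega

lemma wt_of_full {m : ℕ} (hF : Fintype.card F = 4) (w : F) (hw : w ^ 2 + w + 1 = 0)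
    (A B : Finset (Fin m)) (x : Fin m → F) (hs : 2 ≤ A.card + B.card)
    (hg : ¬ ∃ c, genS w c A B x) :
    wtF (((delta A ×ˢ delta B).image (dvec w)).erase 0) x
      = 3 * 2 ^ (A.card + B.card - 2) := by
  rw [wt_eq hF w hw]
  have h := card_DS_eq hF w A B x
  rw [Sx_of_full hF w hw A B x hg] at h
  have hpow : (DS A B).card = 4 * 2 ^ (A.card + B.card - 2) := by
    rw [card_DS]
    have : (4 : ℕ) = 2 ^ 2 := by norm_num
    rw [this, ← pow_add]
    congr 1
    omega
  omega

-- ## counting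

lemma count_Zp {m : ℕ} (hF : Fintype.card F = 4) (A B : Finset (Fin m)) :
    (Finset.univ.filter (fun x : Fin m → F => Zp A B x)).card
      = 4 ^ (m - (A ∪ B).card) := by
  have heq : Finset.univ.filter (fun x : Fin m → F => Zp A B x)
      = Fintype.piFinset (fun i => if i ∈ A ∪ B then ({0} : Finset F) else Finset.univ) := by
    ext x
    rw [Finset.mem_filter]
    simp only [Finset.mem_filter, Finset.mem_univ, true_and, Fintype.mem_piFinset, Zp]
    constructor
    · intro h i
      by_cases hi : i ∈ A ∪ B
      · rw [if_pos hi, Finset.mem_singleton]; exact h i hi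
      · rw [if_neg hi]; exact Finset.mem_univ _
    · intro h i hi
      have := h i
      rwa [if_pos hi, Finset.mem_singleton] at this
  rw [heq, Fintype.card_piFinset]
  have : ∀ i, (if i ∈ A ∪ B then ({0} : Finset F) else Finset.univ).card
      = if i ∈ A ∪ B then 1 else 4 := by
    intro i
    by_cases hi : i ∈ A ∪ B <;> simp [hi, Finset.card_univ, hF]
  rw [Finset.prod_congr rfl (fun i _ => this i)]
  rw [← Finset.prod_mul_prod_compl (A ∪ B)]
  rw [Finset.prod_congr rfl (fun i hi => if_pos hi),
    Finset.prod_congr rfl (fun i hi => if_neg (Finset.mem_compl.mp hi))]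
  rw [Finset.prod_const_one, Finset.prod_const, one_mul, Finset.card_compl,
    Fintype.card_fin]

lemma count_genS {m : ℕ} (hF : Fintype.card F = 4) (w : F) (hw : w ^ 2 + w + 1 = 0)
    {c : F} (hc : c ≠ 0) (A B : Finset (Fin m)) :
    (Finset.univ.filter (fun x : Fin m → F => genS w c A B x)).card
      = 2 ^ ((A \ B).card + (B \ A).card) * 4 ^ (m - (A ∪ B).card) := by
  have hw0 := w_ne_zero w hw
  have hw1 := w_ne_one hF w hw
  have hcube := w_cube w hw
  have heq : Finset.univ.filter (fun x : Fin m → F => genS w c A B x)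
      = Fintype.piFinset (fun i =>
          if i ∈ A ∩ B then ({0} : Finset F)
          else if i ∈ A then {0, c}
          else if i ∈ B then {0, c * (w * w)}
          else Finset.univ) := by
    ext x
    rw [Finset.mem_filter]
    simp only [Finset.mem_filter, Finset.mem_univ, true_and, Fintype.mem_piFinset, genS]
    constructor
    · rintro ⟨h1, h2⟩ i
      by_cases hiA : i ∈ A <;> by_cases hiB : i ∈ B
      · rw [if_pos (Finset.mem_inter.mpr ⟨hiA, hiB⟩), Finset.mem_singleton]
        rcases h1 i hiA with h | h
        · exact h
        · exfalso
          rcases h2 i hiB with h' | h'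
          · rw [h] at h'
            exact (mul_ne_zero hc hw0) h'
          · rw [h] at h'
            have : c * (w - 1) = 0 := by linear_combination h'
            rcases mul_eq_zero.mp this with h'' | h''
            · exact hc h''
            · exact hw1 (by linear_combination h'')
      · rw [if_neg (by simp [hiB]), if_pos hiA, Finset.mem_insert, Finset.mem_singleton]
        exact h1 i hiA
      · rw [if_neg (by simp [hiA]), if_neg hiA, if_pos hiB, Finset.mem_insert,
          Finset.mem_singleton]
        rcases h2 i hiB with h | h
        · left
          rcases mul_eq_zero.mp h with h' | h'
          · exact h'
          · exact absurd h' hw0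
        · right
          have hthis : x i * (w * (w * w)) = c * (w * w) := by linear_combination (w*w) * h
          linear_combination hthis - x i * hcube
      · rw [if_neg (by simp [hiA]), if_neg hiA, if_neg hiB]
        exact Finset.mem_univ _
    · intro h
      constructor
      · intro i hiA
        have hi := h i
        by_cases hiB : i ∈ B
        · rw [if_pos (Finset.mem_inter.mpr ⟨hiA, hiB⟩), Finset.mem_singleton] at hi
          left; exact hi
        · rw [if_neg (by simp [hiB]), if_pos hiA, Finset.mem_insert,
            Finset.mem_singleton] at hi
          exact hi
      · intro i hiB
        have hi := h i
        by_cases hiA : i ∈ A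
        · rw [if_pos (Finset.mem_inter.mpr ⟨hiA, hiB⟩), Finset.mem_singleton] at hi
          left; rw [hi, zero_mul]
        · rw [if_neg (by simp [hiA]), if_neg hiA, if_pos hiB, Finset.mem_insert,
            Finset.mem_singleton] at hi
          rcases hi with h' | h'
          · left; rw [h', zero_mul]
          · right
            rw [h']
            calc c * (w * w) * w = c * (w * w * w) := by ring
            _ = c := by rw [hcube, mul_one]
  rw [heq, Fintype.card_piFinset]
  have hcval : ∀ i, (if i ∈ A ∩ B then ({0} : Finset F)
          else if i ∈ A then {0, c}
          else if i ∈ B then {0, c * (w * w)}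
          else Finset.univ).card
      = if i ∈ A ∩ B then 1 else if i ∈ A then 2 else if i ∈ B then 2 else 4 := by
    intro i
    by_cases h1 : i ∈ A ∩ B
    · simp [h1]
    · by_cases h2 : i ∈ A
      · simp only [if_neg h1, if_pos h2]
        exact Finset.card_pair (Ne.symm hc)
      · by_cases h3 : i ∈ B
        · simp only [if_neg h1, if_neg h2, if_pos h3]
          exact Finset.card_pair (Ne.symm (mul_ne_zero hc (mul_ne_zero hw0 hw0)))
        · simp [h1, h2, h3, Finset.card_univ, hF]
  rw [Finset.prod_congr rfl (fun i _ => hcval i)]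
  rw [← Finset.prod_mul_prod_compl (A ∪ B)]
  have hcompl : ∀ i ∈ (A ∪ B)ᶜ,
      (if i ∈ A ∩ B then 1 else if i ∈ A then 2 else if i ∈ B then 2 else 4) = 4 := by
    intro i hi
    rw [Finset.mem_compl, Finset.mem_union] at hi
    push_neg at hi
    rw [if_neg (by simp [hi.1]), if_neg hi.1, if_neg hi.2]
  have hinter : A ∩ B ⊆ A ∪ B := Finset.inter_subset_union
  rw [← Finset.prod_sdiff hinter]
  have hsd : ∀ i ∈ (A ∪ B) \ (A ∩ B),
      (if i ∈ A ∩ B then 1 else if i ∈ A then 2 else if i ∈ B then 2 else 4) = 2 := by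
    intro i hi
    rw [Finset.mem_sdiff] at hi
    rw [if_neg hi.2]
    rcases Finset.mem_union.mp hi.1 with h | h
    · rw [if_pos h]
    · by_cases h2 : i ∈ A
      · rw [if_pos h2]
      · rw [if_neg h2, if_pos h]
  have hint1 : ∀ i ∈ A ∩ B,
      (if i ∈ A ∩ B then 1 else if i ∈ A then 2 else if i ∈ B then 2 else 4) = 1 := by
    intro i hi
    rw [if_pos hi]
  rw [Finset.prod_congr rfl hsd, Finset.prod_congr rfl hint1,
    Finset.prod_congr rfl hcompl]
  rw [Finset.prod_const, Finset.prod_const_one, Finset.prod_const, mul_one,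
    Finset.card_compl, Fintype.card_fin]
  congr 2
  have h1 := Finset.card_union_add_card_inter A B
  have h2 := Finset.card_sdiff_add_card_inter A B
  have h3 := Finset.card_sdiff_add_card_inter B A
  have h4 : (A ∪ B).card ≥ (A ∩ B).card := Finset.card_le_card hinter
  rw [Finset.card_sdiff_of_subset hinter]
  rw [Finset.inter_comm B A] at h3
  omega

-- ## more classification helpers

lemma genS_zero_Zp {m : ℕ} (w : F) (hw : w ^ 2 + w + 1 = 0) (A B : Finset (Fin m))
    (x : Fin m → F) (hg : genS w 0 A B x) : Zp A B x := by
  intro i hi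
  rcases Finset.mem_union.mp hi with h | h
  · rcases hg.1 i h with h' | h' <;> exact h'
  · rcases hg.2 i h with h' | h' <;>
      exact (mul_eq_zero.mp h').resolve_right (w_ne_zero w hw)

lemma genS_pair_Zp {m : ℕ} (w : F) (hw : w ^ 2 + w + 1 = 0) {c₁ c₂ : F} (hc : c₁ ≠ c₂)
    (A B : Finset (Fin m)) (x : Fin m → F)
    (h1 : genS w c₁ A B x) (h2 : genS w c₂ A B x) : Zp A B x := by
  intro i hi
  rcases Finset.mem_union.mp hi with h | h
  · rcases h1.1 i h with h' | h'
    · exact h'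
    · rcases h2.1 i h with h'' | h''
      · exact h''
      · exact absurd (h'.symm.trans h'') hc
  · have : x i * w = 0 := by
      rcases h1.2 i h with h' | h'
      · exact h'
      · rcases h2.2 i h with h'' | h''
        · exact h''
        · exact absurd (h'.symm.trans h'') hc
    exact (mul_eq_zero.mp this).resolve_right (w_ne_zero w hw)

lemma wt_eq_zero_iff {m : ℕ} (hF : Fintype.card F = 4) (w : F) (hw : w ^ 2 + w + 1 = 0)
    (A B : Finset (Fin m)) (hs : 2 ≤ A.card + B.card) (x : Fin m → F) :
    wtF (((delta A ×ˢ delta B).image (dvec w)).erase 0) x = 0 ↔ Zp A B x := by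
  constructor
  · intro h
    by_contra hz
    by_cases hgen : ∃ c, genS w c A B x
    · obtain ⟨c, hc⟩ := hgen
      rw [wt_of_line hF w hw A B x (by omega) hc hz] at h
      have : 0 < 2 ^ (A.card + B.card - 1) := Nat.pow_pos (by norm_num)
      omega
    · rw [wt_of_full hF w hw A B x hs hgen] at h
      have : 0 < 3 * 2 ^ (A.card + B.card - 2) :=
        Nat.mul_pos (by norm_num) (Nat.pow_pos (by norm_num))
      omega
  · exact wt_of_Zp hF w hw A B x

lemma wt_eq_v1_iff {m : ℕ} (hF : Fintype.card F = 4) (w : F) (hw : w ^ 2 + w + 1 = 0)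
    (A B : Finset (Fin m)) (hs : 2 ≤ A.card + B.card) (x : Fin m → F) :
    wtF (((delta A ×ˢ delta B).image (dvec w)).erase 0) x = 2 ^ (A.card + B.card - 1)
      ↔ ((∃ c, genS w c A B x) ∧ ¬ Zp A B x) := by
  have hp2 : 0 < 2 ^ (A.card + B.card - 2) := Nat.pow_pos (by norm_num)
  have hv12 : 2 ^ (A.card + B.card - 1) = 2 * 2 ^ (A.card + B.card - 2) := by
    rw [← pow_succ']
    congr 1
    omega
  constructor
  · intro h
    by_cases hz : Zp A B x
    · rw [wt_of_Zp hF w hw A B x hz] at h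
      exfalso
      have : 0 < 2 ^ (A.card + B.card - 1) := Nat.pow_pos (by norm_num)
      omega
    · by_cases hgen : ∃ c, genS w c A B x
      · exact ⟨hgen, hz⟩
      · rw [wt_of_full hF w hw A B x hs hgen] at h
        omega
  · rintro ⟨⟨c, hc⟩, hz⟩
    exact wt_of_line hF w hw A B x (by omega) hc hz

lemma count_map_univ {α β : Type*} [Fintype α] [DecidableEq β] (f : α → β) (b : β) :
    Multiset.count b (Finset.univ.val.map f)
      = (Finset.univ.filter (fun a => f a = b)).card := by
  rw [Multiset.count_map]
  rw [Finset.card_filter]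
  rw [Finset.sum_boole]
  simp only [eq_comm]
  rfl

lemma count_v1 {m : ℕ} (hF : Fintype.card F = 4) (w : F) (hw : w ^ 2 + w + 1 = 0)
    (A B : Finset (Fin m)) :
    (Finset.univ.filter
        (fun x : Fin m → F => (∃ c, genS w c A B x) ∧ ¬ Zp A B x)).card
      = 3 * 4 ^ (m - (A ∪ B).card) * (2 ^ ((A \ B).card + (B \ A).card) - 1) := by
  have hbi : Finset.univ.filter
        (fun x : Fin m → F => (∃ c, genS w c A B x) ∧ ¬ Zp A B x)
      = ((Finset.univ : Finset F).erase 0).biUnion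
          (fun c => Finset.univ.filter
            (fun x : Fin m → F => genS w c A B x ∧ ¬ Zp A B x)) := by
    ext x
    simp only [Finset.mem_filter, Finset.mem_univ, true_and, Finset.mem_biUnion,
      Finset.mem_erase]
    constructor
    · rintro ⟨⟨c, hc⟩, hz⟩
      have hc0 : c ≠ 0 := by
        intro h0; subst h0
        exact hz (genS_zero_Zp w hw A B x hc)
      exact ⟨c, by simp [hc0], hc, hz⟩
    · rintro ⟨c, _, hgen, hz⟩
      exact ⟨⟨c, hgen⟩, hz⟩
  have hdisj : ∀ c₁ ∈ (Finset.univ : Finset F).erase 0,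
      ∀ c₂ ∈ (Finset.univ : Finset F).erase 0, c₁ ≠ c₂ →
      Disjoint (Finset.univ.filter (fun x : Fin m → F => genS w c₁ A B x ∧ ¬ Zp A B x))
        (Finset.univ.filter (fun x : Fin m → F => genS w c₂ A B x ∧ ¬ Zp A B x)) := by
    intro c₁ h₁ c₂ h₂ hne
    simp only [Finset.disjoint_left, Finset.mem_filter, Finset.mem_univ, true_and]
    rintro x ⟨hg1, hz⟩ ⟨hg2, _⟩
    exact hz (genS_pair_Zp w hw hne A B x hg1 hg2)
  rw [hbi, Finset.card_biUnion hdisj]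
  have hone : ∀ c ∈ (Finset.univ : Finset F).erase 0,
        (Finset.univ.filter
          (fun x : Fin m → F => genS w c A B x ∧ ¬ Zp A B x)).card
        = 2 ^ ((A \ B).card + (B \ A).card) * 4 ^ (m - (A ∪ B).card)
            - 4 ^ (m - (A ∪ B).card) := by
      intro c hc
      have hc0 : c ≠ 0 := (Finset.mem_erase.mp hc).1
      have hsd : Finset.univ.filter (fun x : Fin m → F => genS w c A B x ∧ ¬ Zp A B x)
          = Finset.univ.filter (fun x : Fin m → F => genS w c A B x)
            \ Finset.univ.filter (fun x : Fin m → F => Zp A B x) := by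
        ext x
        simp only [Finset.mem_filter, Finset.mem_univ, true_and, Finset.mem_sdiff]
        try tauto
      have hsub : Finset.univ.filter (fun x : Fin m → F => Zp A B x)
          ⊆ Finset.univ.filter (fun x : Fin m → F => genS w c A B x) := by
        intro x hx
        rw [Finset.mem_filter] at *
        exact ⟨hx.1, Zp_genS w c A B x (hx.2)⟩
      rw [hsd, Finset.card_sdiff_of_subset hsub, count_genS hF w hw hc0 A B, count_Zp hF A B]
  rw [Finset.sum_congr rfl hone, Finset.sum_const, smul_eq_mul]
  have hcard3 : ((Finset.univ : Finset F).erase 0).card = 3 := by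
    rw [Finset.card_erase_of_mem (Finset.mem_univ 0), Finset.card_univ, hF]
  rw [hcard3]
  obtain ⟨q, hq⟩ : ∃ q, 2 ^ ((A \ B).card + (B \ A).card) = q + 1 :=
    ⟨2 ^ ((A \ B).card + (B \ A).card) - 1,
      by have := Nat.pow_pos (n := (A \ B).card + (B \ A).card) (show 0 < 2 by norm_num); omega⟩
  rw [hq, Nat.add_sub_cancel, add_mul, one_mul, Nat.add_sub_cancel]
  ring

-- ## fiber cardinalities in terms of weights

lemma count_wt0 {m : ℕ} (hF : Fintype.card F = 4) (w : F) (hw : w ^ 2 + w + 1 = 0)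
    (A B : Finset (Fin m)) (hs : 2 ≤ A.card + B.card) :
    (Finset.univ.filter (fun x : Fin m → F =>
        wtF (((delta A ×ˢ delta B).image (dvec w)).erase 0) x = 0)).card
      = 4 ^ (m - (A ∪ B).card) := by
  rw [Finset.filter_congr (fun x _ => by
    rw [wt_eq_zero_iff hF w hw A B hs x])]
  exact count_Zp hF A B

lemma count_wt1 {m : ℕ} (hF : Fintype.card F = 4) (w : F) (hw : w ^ 2 + w + 1 = 0)
    (A B : Finset (Fin m)) (hs : 2 ≤ A.card + B.card) :
    (Finset.univ.filter (fun x : Fin m → F =>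
        wtF (((delta A ×ˢ delta B).image (dvec w)).erase 0) x
          = 2 ^ (A.card + B.card - 1))).card
      = 3 * 4 ^ (m - (A ∪ B).card) * (2 ^ ((A \ B).card + (B \ A).card) - 1) := by
  rw [Finset.filter_congr (fun x _ => by
    rw [wt_eq_v1_iff hF w hw A B hs x])]
  exact count_v1 hF w hw A B

lemma wt_tri {m : ℕ} (hF : Fintype.card F = 4) (w : F) (hw : w ^ 2 + w + 1 = 0)
    (A B : Finset (Fin m)) (hs : 2 ≤ A.card + B.card) (x : Fin m → F) :
    wtF (((delta A ×ˢ delta B).image (dvec w)).erase 0) x = 0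
    ∨ wtF (((delta A ×ˢ delta B).image (dvec w)).erase 0) x = 2 ^ (A.card + B.card - 1)
    ∨ wtF (((delta A ×ˢ delta B).image (dvec w)).erase 0) x
        = 3 * 2 ^ (A.card + B.card - 2) := by
  by_cases hz : Zp A B x
  · left; exact wt_of_Zp hF w hw A B x hz
  · by_cases hgen : ∃ c, genS w c A B x
    · right; left
      obtain ⟨c, hc⟩ := hgen
      exact wt_of_line hF w hw A B x (by omega) hc hz
    · right; right
      exact wt_of_full hF w hw A B x hs hgen

lemma ab_le_u {m : ℕ} (A B : Finset (Fin m)) :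
    (A \ B).card + (B \ A).card ≤ (A ∪ B).card := by
  have h1 := Finset.card_union_add_card_inter A B
  have h2 := Finset.card_sdiff_add_card_inter A B
  have h3 := Finset.card_sdiff_add_card_inter B A
  rw [Finset.inter_comm B A] at h3
  omega

lemma three_p_le {m : ℕ} (A B : Finset (Fin m)) :
    3 * 2 ^ ((A \ B).card + (B \ A).card) ≤ 4 ^ ((A ∪ B).card) + 2 := by
  have hab := ab_le_u A B
  have hple : (2:ℕ) ^ ((A \ B).card + (B \ A).card) ≤ 2 ^ (A ∪ B).card :=
    Nat.pow_le_pow_right (by norm_num) hab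
  have h4 : (4:ℕ) ^ (A ∪ B).card = 2 ^ (A ∪ B).card * 2 ^ (A ∪ B).card := by
    rw [← Nat.mul_pow]
  set t := (2:ℕ) ^ (A ∪ B).card with ht
  have ht1 : 1 ≤ t := Nat.one_le_two_pow
  have key : 3 * t ≤ t * t + 2 := by
    rcases Nat.lt_or_ge t 3 with h | h
    · interval_cases t <;> norm_num
    · have : 3 * t ≤ t * t := Nat.mul_le_mul_right t h
      omega
  calc 3 * 2 ^ ((A \ B).card + (B \ A).card) ≤ 3 * t := by
        exact Nat.mul_le_mul_left 3 hple
  _ ≤ t * t + 2 := key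
  _ = 4 ^ (A ∪ B).card + 2 := by rw [h4]

lemma count_wt2 {m : ℕ} (hF : Fintype.card F = 4) (w : F) (hw : w ^ 2 + w + 1 = 0)
    (A B : Finset (Fin m)) (hs : 2 ≤ A.card + B.card) :
    (Finset.univ.filter (fun x : Fin m → F =>
        wtF (((delta A ×ˢ delta B).image (dvec w)).erase 0) x
          = 3 * 2 ^ (A.card + B.card - 2))).card
      = 4 ^ (m - (A ∪ B).card)
          * (4 ^ (A ∪ B).card - 1 - 3 * (2 ^ ((A \ B).card + (B \ A).card) - 1)) := by
  have hv12 : (2:ℕ) ^ (A.card + B.card - 1) = 2 * 2 ^ (A.card + B.card - 2) := by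
    rw [← pow_succ']; congr 1; omega
  have hp2 : (0:ℕ) < 2 ^ (A.card + B.card - 2) := Nat.pow_pos (by norm_num)
  have hd1 : (2:ℕ) ^ (A.card + B.card - 1) ≠ 0 := by positivity
  have hd2 : (3:ℕ) * 2 ^ (A.card + B.card - 2) ≠ 0 := by positivity
  have hd3 : (2:ℕ) ^ (A.card + B.card - 1) ≠ 3 * 2 ^ (A.card + B.card - 2) := by omega
  have hpartition := Finset.card_filter_add_card_filter_not
    (s := (Finset.univ : Finset (Fin m → F)))
    (p := fun x => wtF (((delta A ×ˢ delta B).image (dvec w)).erase 0) x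
          = 3 * 2 ^ (A.card + B.card - 2))
  have hneg : Finset.univ.filter (fun x : Fin m → F =>
        ¬ wtF (((delta A ×ˢ delta B).image (dvec w)).erase 0) x
          = 3 * 2 ^ (A.card + B.card - 2))
      = Finset.univ.filter (fun x : Fin m → F =>
          wtF (((delta A ×ˢ delta B).image (dvec w)).erase 0) x = 0)
        ∪ Finset.univ.filter (fun x : Fin m → F =>
          wtF (((delta A ×ˢ delta B).image (dvec w)).erase 0) x
            = 2 ^ (A.card + B.card - 1)) := by
    ext x
    simp only [Finset.mem_filter, Finset.mem_univ, true_and, Finset.mem_union]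
    constructor
    · intro h
      rcases wt_tri hF w hw A B hs x with h' | h' | h'
      · left; exact h'
      · right; exact h'
      · exact absurd h' h
    · intro h h'
      rcases h with h | h <;> omega
  have hdisj : Disjoint
      (Finset.univ.filter (fun x : Fin m → F =>
          wtF (((delta A ×ˢ delta B).image (dvec w)).erase 0) x = 0))
      (Finset.univ.filter (fun x : Fin m → F =>
          wtF (((delta A ×ˢ delta B).image (dvec w)).erase 0) x
            = 2 ^ (A.card + B.card - 1))) := by
    simp only [Finset.disjoint_left, Finset.mem_filter, Finset.mem_univ, true_and]
    intro x h1 h2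
    omega
  rw [hneg, Finset.card_union_of_disjoint hdisj, count_wt0 hF w hw A B hs,
    count_wt1 hF w hw A B hs] at hpartition
  have hcard_univ : (Finset.univ : Finset (Fin m → F)).card = 4 ^ m := by
    rw [Finset.card_univ, Fintype.card_fun, hF, Fintype.card_fin]
  rw [hcard_univ] at hpartition
  -- arithmetic
  have humle : (A ∪ B).card ≤ m := by
    have := Finset.card_le_univ (A ∪ B)
    simp only [Finset.card_univ, Fintype.card_fin] at this
    exact this
  have hEQ : (4:ℕ) ^ m = 4 ^ (m - (A ∪ B).card) * 4 ^ (A ∪ B).card := by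
    rw [← pow_add]; congr 1; omega
  have h3p := three_p_le A B
  obtain ⟨q, hq⟩ : ∃ q, 2 ^ ((A \ B).card + (B \ A).card) = q + 1 :=
    ⟨2 ^ ((A \ B).card + (B \ A).card) - 1,
      by have : (0:ℕ) < 2 ^ ((A \ B).card + (B \ A).card) := Nat.pow_pos (by norm_num); omega⟩
  obtain ⟨r, hr⟩ : ∃ r, 4 ^ ((A ∪ B).card) = r + 1 + 3 * q := by
    refine ⟨4 ^ ((A ∪ B).card) - 1 - 3 * q, ?_⟩
    rw [hq] at h3p
    omega
  set E := (4:ℕ) ^ (m - (A ∪ B).card) with hE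
  rw [hq, hr] at *
  have e1 : r + 1 + 3 * q - 1 - 3 * (q + 1 - 1) = r := by omega
  rw [e1]
  have e2 : q + 1 - 1 = q := by omega
  rw [e2] at hpartition
  have e3 : E * (r + 1 + 3 * q) = E * r + E + 3 * (E * q) := by ring
  rw [hEQ, e3] at hpartition
  have e4 : 3 * E * q = 3 * (E * q) := by ring
  rw [e4] at hpartition
  omega

-- ## Part 1

lemma part1 {m : ℕ} (hF : Fintype.card F = 4) (w : F) (hw : w ^ 2 + w + 1 = 0)
    (A B : Finset (Fin m)) :
    (((delta A ×ˢ delta B).image (dvec w)).erase 0).card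
      = 2 ^ (A.card + B.card) - 1 := by
  have h0 : (0 : Fin m → F) ∈ (delta A ×ˢ delta B).image (dvec w) :=
    Finset.mem_image.mpr ⟨0, zero_mem_DS A B, dvec_zero w⟩
  rw [Finset.card_erase_of_mem h0,
    Finset.card_image_of_injective _ (dvec_inj hF w hw)]
  rw [show delta A ×ˢ delta B = DS A B from rfl, card_DS]

-- ## Part 3

lemma part3 {m : ℕ} (hF : Fintype.card F = 4) (w : F) (hw : w ^ 2 + w + 1 = 0)
    (A B : Finset (Fin m)) (hs : 2 ≤ A.card + B.card) :
    (Finset.univ.val.map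
        (fun x : Fin m → F => wtF (((delta A ×ˢ delta B).image (dvec w)).erase 0) x))
      = Multiset.replicate (4 ^ (m - (A ∪ B).card)) 0
        + Multiset.replicate (3 * 4 ^ (m - (A ∪ B).card)
            * (2 ^ ((A \ B).card + (B \ A).card) - 1)) (2 ^ (A.card + B.card - 1))
        + Multiset.replicate (4 ^ (m - (A ∪ B).card)
            * (4 ^ (A ∪ B).card - 1 - 3 * (2 ^ ((A \ B).card + (B \ A).card) - 1)))
          (3 * 2 ^ (A.card + B.card - 2)) := by
  have hv12 : (2:ℕ) ^ (A.card + B.card - 1) = 2 * 2 ^ (A.card + B.card - 2) := by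
    rw [← pow_succ']; congr 1; omega
  have hp2 : (0:ℕ) < 2 ^ (A.card + B.card - 2) := Nat.pow_pos (by norm_num)
  have hd1 : (0:ℕ) ≠ 2 ^ (A.card + B.card - 1) := by omega
  have hd2 : (0:ℕ) ≠ 3 * 2 ^ (A.card + B.card - 2) := by omega
  have hd3 : (2:ℕ) ^ (A.card + B.card - 1) ≠ 3 * 2 ^ (A.card + B.card - 2) := by omega
  ext n
  rw [count_map_univ]
  simp only [Multiset.count_add, Multiset.count_replicate]
  by_cases h0 : n = 0
  · subst h0
    rw [if_pos rfl, if_neg (by omega), if_neg (by omega), count_wt0 hF w hw A B hs]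
    omega
  · by_cases h1 : n = 2 ^ (A.card + B.card - 1)
    · subst h1
      rw [if_neg (by omega), if_pos rfl, if_neg (by omega), count_wt1 hF w hw A B hs]
      omega
    · by_cases h2 : n = 3 * 2 ^ (A.card + B.card - 2)
      · subst h2
        rw [if_neg (by omega), if_neg (by omega), if_pos rfl,
          count_wt2 hF w hw A B hs]
        omega
      · rw [if_neg (by omega), if_neg (by omega), if_neg (by omega)]
        simp only [add_zero]
        rw [Finset.card_eq_zero, Finset.filter_eq_empty_iff]
        intro x _
        rcases wt_tri hF w hw A B hs x with h | h | h <;> omega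

-- ## Part 2

lemma dot_sub {m : ℕ} (x y d : Fin m → F) :
    dotF (x - y) d = dotF x d - dotF y d := by
  simp only [dotF, Pi.sub_apply, sub_mul, Finset.sum_sub_distrib]

lemma dotD_zero_iff {m : ℕ} (hF : Fintype.card F = 4) (w : F) (hw : w ^ 2 + w + 1 = 0)
    (A B : Finset (Fin m)) (x : Fin m → F) :
    (∀ d ∈ ((delta A ×ˢ delta B).image (dvec w)).erase 0, dotF x d = 0)
      ↔ Zp A B x := by
  constructor
  · intro h i hi
    rcases Finset.mem_union.mp hi with hiA | hiB
    · have hd : dvec w (sing i, (0 : Fin m → ZMod 2))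
          ∈ ((delta A ×ˢ delta B).image (dvec w)).erase 0 := by
        rw [Finset.mem_erase]
        constructor
        · intro hc
          have h1 : dvec w (sing i, (0 : Fin m → ZMod 2)) i = 1 := by
            show e2 (sing i i) + w * e2 ((0 : Fin m → ZMod 2) i) = 1
            simp [sing, e2_one, e2_zero]
          rw [hc] at h1
          simp only [Pi.zero_apply] at h1
          exact one_ne_zero h1.symm
        · exact Finset.mem_image.mpr ⟨(sing i, 0),
            Finset.mem_product.mpr ⟨sing_mem_delta hiA, zero_mem_delta⟩, rfl⟩
      have := h _ hd
      rwa [dot_dvec_singleA] at this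
    · have hd : dvec w ((0 : Fin m → ZMod 2), sing i)
          ∈ ((delta A ×ˢ delta B).image (dvec w)).erase 0 := by
        rw [Finset.mem_erase]
        constructor
        · intro hc
          have h1 : dvec w ((0 : Fin m → ZMod 2), sing i) i = w := by
            show e2 ((0 : Fin m → ZMod 2) i) + w * e2 (sing i i) = w
            simp [sing, e2_one, e2_zero]
          rw [hc] at h1
          simp only [Pi.zero_apply] at h1
          exact w_ne_zero w hw h1.symm
        · exact Finset.mem_image.mpr ⟨(0, sing i),
            Finset.mem_product.mpr ⟨zero_mem_delta, sing_mem_delta hiB⟩, rfl⟩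
      have := h _ hd
      rw [dot_dvec_singleB] at this
      exact (mul_eq_zero.mp this).resolve_right (w_ne_zero w hw)
  · intro hz d hd
    obtain ⟨p, hp, rfl⟩ := Finset.mem_image.mp (Finset.mem_of_mem_erase hd)
    rw [Finset.mem_product, mem_delta, mem_delta] at hp
    rw [dotF]
    apply Finset.sum_eq_zero
    intro i _
    by_cases hi : i ∈ A ∪ B
    · rw [hz i hi, zero_mul]
    · have h1 : p.1 i = 0 := hp.1 i (fun h => hi (Finset.mem_union_left _ h))
      have h2 : p.2 i = 0 := hp.2 i (fun h => hi (Finset.mem_union_right _ h))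
      show x i * dvec w p i = 0
      rw [dvec, h1, h2, e2_zero, mul_zero, add_zero, mul_zero]

lemma codeword_eq_iff {m : ℕ} (hF : Fintype.card F = 4) (w : F) (hw : w ^ 2 + w + 1 = 0)
    (A B : Finset (Fin m)) (x y : Fin m → F) :
    codeword (((delta A ×ˢ delta B).image (dvec w)).erase 0) x
      = codeword (((delta A ×ˢ delta B).image (dvec w)).erase 0) y
    ↔ Zp A B (x - y) := by
  rw [← dotD_zero_iff hF w hw A B (x - y)]
  rw [funext_iff]
  constructor
  · intro h d hd
    have := h ⟨d, hd⟩
    rw [codeword, codeword] at this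
    rw [dot_sub, this, sub_self]
  · intro h d
    have := h d.1 d.2
    rw [dot_sub, sub_eq_zero] at this
    exact this

lemma part2 {m : ℕ} (hF : Fintype.card F = 4) (w : F) (hw : w ^ 2 + w + 1 = 0)
    (A B : Finset (Fin m)) :
    (Finset.univ.image
        (fun x : Fin m → F => codeword (((delta A ×ˢ delta B).image (dvec w)).erase 0) x)).card
      = 4 ^ (A ∪ B).card := by
  set cw := fun x : Fin m → F =>
    codeword (((delta A ×ˢ delta B).image (dvec w)).erase 0) x with hcw
  have hfib : ∀ t ∈ Finset.univ.image cw,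
      (Finset.univ.filter (fun y : Fin m → F => cw y = t)).card
        = 4 ^ (m - (A ∪ B).card) := by
    intro t ht
    obtain ⟨x, _, rfl⟩ := Finset.mem_image.mp ht
    rw [← count_Zp hF A B]
    apply Finset.card_bij' (i := fun y _ => y - x) (j := fun z _ => z + x)
    · intro y hy
      rw [Finset.mem_filter] at *
      exact ⟨Finset.mem_univ _, (codeword_eq_iff hF w hw A B y x).mp hy.2⟩
    · intro z hz
      rw [Finset.mem_filter] at *
      refine ⟨Finset.mem_univ _, ?_⟩
      rw [codeword_eq_iff hF w hw A B, add_sub_cancel_right]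
      exact hz.2
    · intro y _; rw [sub_add_cancel]
    · intro z _; rw [add_sub_cancel_right]
  have htot := Finset.card_eq_sum_card_fiberwise
    (f := cw) (s := (Finset.univ : Finset (Fin m → F))) (t := Finset.univ.image cw)
    (fun x _ => Finset.mem_image_of_mem cw (Finset.mem_univ x))
  rw [Finset.sum_congr rfl hfib, Finset.sum_const, smul_eq_mul] at htot
  have hcard_univ : (Finset.univ : Finset (Fin m → F)).card = 4 ^ m := by
    rw [Finset.card_univ, Fintype.card_fun, hF, Fintype.card_fin]
  have humle : (A ∪ B).card ≤ m := by
    have := Finset.card_le_univ (A ∪ B)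
    simp only [Finset.card_univ, Fintype.card_fin] at this
    exact this
  have hEQ : (4:ℕ) ^ m = 4 ^ (A ∪ B).card * 4 ^ (m - (A ∪ B).card) := by
    rw [← pow_add]; congr 1; omega
  rw [hcard_univ, hEQ] at htot
  have hEpos : (0:ℕ) < 4 ^ (m - (A ∪ B).card) := Nat.pow_pos (by norm_num)
  exact (Nat.eq_of_mul_eq_mul_right hEpos htot.symm)

-- ## Part 4

lemma part4a {m : ℕ} (hF : Fintype.card F = 4) (w : F) (hw : w ^ 2 + w + 1 = 0)
    (A B : Finset (Fin m)) (hs : 2 ≤ A.card + B.card) (x : Fin m → F) :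
    wtF (((delta A ×ˢ delta B).image (dvec w)).erase 0) x = 0
      ∨ 2 ^ (A.card + B.card - 1)
          ≤ wtF (((delta A ×ˢ delta B).image (dvec w)).erase 0) x := by
  have hv12 : (2:ℕ) ^ (A.card + B.card - 1) = 2 * 2 ^ (A.card + B.card - 2) := by
    rw [← pow_succ']; congr 1; omega
  rcases wt_tri hF w hw A B hs x with h | h | h
  · left; exact h
  · right; omega
  · right; omega

lemma part4b {m : ℕ} (hF : Fintype.card F = 4) (w : F) (hw : w ^ 2 + w + 1 = 0)
    (A B : Finset (Fin m)) (hs : 2 ≤ A.card + B.card) (hne : A ≠ B) :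
    ∃ x : Fin m → F,
      wtF (((delta A ×ˢ delta B).image (dvec w)).erase 0) x
        = 2 ^ (A.card + B.card - 1) := by
  have hex : (∃ i, i ∈ A ∧ i ∉ B) ∨ (∃ i, i ∈ B ∧ i ∉ A) := by
    by_contra h
    push_neg at h
    exact hne (Finset.Subset.antisymm (fun i hi => h.1 i hi) (fun i hi => h.2 i hi))
  rcases hex with ⟨i, hiA, hiB⟩ | ⟨i, hiB, hiA⟩
  · refine ⟨fun j => if j = i then 1 else 0, ?_⟩
    have hz : ¬ Zp A B (fun j => if j = i then (1:F) else 0) := by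
      intro h
      have := h i (Finset.mem_union_left _ hiA)
      simp at this
    have hgen : genS w 1 A B (fun j => if j = i then (1:F) else 0) := by
      constructor
      · intro j hj
        by_cases hji : j = i
        · right; simp [hji]
        · left; simp [hji]
      · intro j hj
        left
        have hji : j ≠ i := fun h => hiB (h ▸ hj)
        simp [hji]
    exact wt_of_line hF w hw A B _ (by omega) hgen hz
  · refine ⟨fun j => if j = i then 1 else 0, ?_⟩
    have hz : ¬ Zp A B (fun j => if j = i then (1:F) else 0) := by
      intro h
      have := h i (Finset.mem_union_right _ hiB)
      simp at this
    have hgen : genS w w A B (fun j => if j = i then (1:F) else 0) := by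
      constructor
      · intro j hj
        left
        have hji : j ≠ i := fun h => hiA (h ▸ hj)
        simp [hji]
      · intro j hj
        by_cases hji : j = i
        · right; simp [hji]
        · left; simp [hji]
    exact wt_of_line hF w hw A B _ (by omega) hgen hz

-- ## main theorem

/-- Proposition 4.2: for `D = Δ_A + wΔ_B` with `|A|+|B| ≥ 2`, the punctured code `C_{D^*}`
is a `[2^{|A|+|B|}−1, |A∪B|, 2^{|A|+|B|−1}]` quaternary code with the stated weight
distribution; if `A ≠ B` its minimum distance is `2^{|A|+|B|−1}`. -/
theorem quaternary_code_simplicial_pair {m : ℕ} (hm : 1 ≤ m)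
    (hF : Fintype.card F = 4) (w : F) (hw : w ^ 2 + w + 1 = 0)
    (A B : Finset (Fin m)) (hAB : 2 ≤ A.card + B.card) :
    (((delta A ×ˢ delta B).image (dvec w)).erase 0).card = 2 ^ (A.card + B.card) - 1
    ∧ (Finset.univ.image
        (fun x : Fin m → F => codeword (((delta A ×ˢ delta B).image (dvec w)).erase 0) x)).card
      = 4 ^ (A ∪ B).card
    ∧ (Finset.univ.val.map
        (fun x : Fin m → F => wtF (((delta A ×ˢ delta B).image (dvec w)).erase 0) x))
      = Multiset.replicate (4 ^ (m - (A ∪ B).card)) 0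
        + Multiset.replicate (3 * 4 ^ (m - (A ∪ B).card)
            * (2 ^ ((A \ B).card + (B \ A).card) - 1)) (2 ^ (A.card + B.card - 1))
        + Multiset.replicate (4 ^ (m - (A ∪ B).card)
            * (4 ^ (A ∪ B).card - 1 - 3 * (2 ^ ((A \ B).card + (B \ A).card) - 1)))
          (3 * 2 ^ (A.card + B.card - 2))
    ∧ (A ≠ B →
        (∀ x : Fin m → F, wtF (((delta A ×ˢ delta B).image (dvec w)).erase 0) x = 0
            ∨ 2 ^ (A.card + B.card - 1) ≤ wtF (((delta A ×ˢ delta B).image (dvec w)).erase 0) x)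
        ∧ (∃ x : Fin m → F,
            wtF (((delta A ×ˢ delta B).image (dvec w)).erase 0) x = 2 ^ (A.card + B.card - 1))) := by
  refine ⟨part1 hF w hw A B, part2 hF w hw A B, part3 hF w hw A B hAB, fun hne => ?_⟩
  exact ⟨part4a hF w hw A B hAB, part4b hF w hw A B hAB hne⟩
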